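/- Let k be a field of characteristic zero, X a finite type equipped with a fixed-point-free involution c : X → X, and Σ a subset of X such that Σ and c(Σ) are disjoint with union X; let g = |Σ|. Fix a linear order on X, let V be the k-vector space with basis (e_x)_{x∈X}, and in Λ(V) set L = ∑_{σ∈Σ} e_σ ∧ e_{cσ}, writing e_S for the ordered wedge product over S ⊆ X. Let I ⊆ Σ and J ⊆ c(Σ) with |I| + |J| = i ≤ g. If I ∩ c(J) ≠ ∅, then L^{g-i+1} ∧ e_{I∪J} ≠ 0. -/

import Mathlib

section GenRing
variable {R : Type*} [Ring R]

lemma aux_mul_prod_eq_zero (a : R) (ha : a * a = 0) :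
    ∀ (l : List R), a ∈ l → (∀ x ∈ l, a * x = x * a) → a * l.prod = 0 := by
  intro l
  induction l with
  | nil => simp
  | cons b t ih =>
    intro hm hc
    rw [List.prod_cons, ← mul_assoc]
    rcases List.mem_cons.mp hm with h | h
    · rw [← h, ha, zero_mul]
    · rw [hc b List.mem_cons_self, mul_assoc,
        ih h (fun x hx => hc x (List.mem_cons_of_mem _ hx)), mul_zero]

lemma aux_list_sum_mul_eq_zero (l : List R) (x : R) (h : ∀ a ∈ l, a * x = 0) :
    l.sum * x = 0 := by
  induction l with
  | nil => simp
  | cons b t ih =>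
    rw [List.sum_cons, add_mul, h b (by simp), zero_add]
    exact ih fun a ha => h a (by simp [ha])

lemma aux_sum_mul_prod_eq_zero (l : List R) (hsq : ∀ a ∈ l, a * a = 0)
    (hc : ∀ a ∈ l, ∀ b ∈ l, a * b = b * a) : l.sum * l.prod = 0 :=
  aux_list_sum_mul_eq_zero l _ fun a ha =>
    aux_mul_prod_eq_zero a (hsq a ha) _ ha (fun x hx => hc a ha x hx)

lemma aux_sum_pow_length (l : List R) (hsq : ∀ a ∈ l, a * a = 0)
    (hc : ∀ a ∈ l, ∀ b ∈ l, a * b = b * a) :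
    l.sum ^ l.length = l.length.factorial • l.prod := by
  induction l with
  | nil => simp
  | cons a t ih =>
    have hsq' : ∀ x ∈ t, x * x = 0 := fun x hx => hsq x (by simp [hx])
    have hc' : ∀ x ∈ t, ∀ y ∈ t, x * y = y * x :=
      fun x hx y hy => hc x (by simp [hx]) y (by simp [hy])
    have iht := ih hsq' hc'
    have hat : Commute a t.sum :=
      Commute.list_sum_right _ _ fun y hy => hc a (by simp) y (by simp [hy])
    rw [List.sum_cons, List.length_cons, Commute.add_pow hat]
    have hterm : ∀ m ∈ Finset.range (t.length + 1 + 1),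
        a ^ m * t.sum ^ (t.length + 1 - m) * ((t.length + 1).choose m : R)
        = if m = 1 then (t.length+1).factorial • (a :: t).prod else 0 := by
      intro m _
      rcases m with _ | _ | m
      · have hz : t.sum ^ (t.length + 1) = 0 := by
          rw [pow_succ', iht, mul_smul_comm,
            aux_sum_mul_prod_eq_zero t hsq' hc', smul_zero]
        simp [hz]
      · have h1 : t.sum ^ (t.length + 1 - 1) = t.length.factorial • t.prod := by
          simpa using iht
        simp only [zero_add, pow_one, h1, if_pos rfl]
        rw [mul_smul_comm, smul_mul_assoc,
          ← (Nat.cast_commute ((t.length+1).choose 1) (a * t.prod)).eq,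
          ← nsmul_eq_mul, smul_smul, Nat.choose_one_right, List.prod_cons,
          Nat.factorial_succ, Nat.mul_comm t.length.factorial, if_true]
      · have hz : a ^ (m + 1 + 1) = 0 := by
          rw [pow_succ, pow_succ, mul_assoc, hsq a (by simp), mul_zero]
        simp [hz]
    rw [Finset.sum_congr rfl hterm]
    simp

end GenRing

section ExtGen
open ExteriorAlgebra
variable {R : Type*} [CommRing R] {M : Type*} [AddCommGroup M] [Module R M]

lemma iota_swap (u v : M) : ι R u * ι R v = -(ι R v * ι R u) := by
  have := ExteriorAlgebra.ι_add_mul_swap (R := R) u v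
  linear_combination (norm := noncomm_ring) this

lemma iota_pair_comm (u v w : M) : (ι R u * ι R v) * ι R w = ι R w * (ι R u * ι R v) := by
  rw [mul_assoc, iota_swap v w, mul_neg, ← mul_assoc, iota_swap u w]
  noncomm_ring

lemma iota_pair_commute (u v w z : M) :
    Commute (ι R u * ι R v) (ι R w * ι R z) := by
  have h1 : Commute (ι R u * ι R v) (ι R w) := iota_pair_comm u v w
  have h2 : Commute (ι R u * ι R v) (ι R z) := iota_pair_comm u v z
  exact h1.mul_right h2

lemma iota_pair_sq (u v : M) : (ι R u * ι R v) * (ι R u * ι R v) = 0 := by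
  rw [mul_assoc, ← mul_assoc (ι R v), iota_swap v u, neg_mul, mul_neg,
    neg_eq_zero, ← mul_assoc, ← mul_assoc, ι_sq_zero, zero_mul, zero_mul]

end ExtGen

/-- The basis vector `e_x` of `V = X → k` inside the exterior algebra `Λ(V)`. -/
noncomputable def eVec (k : Type*) {X : Type*} [Field k] [DecidableEq X] (x : X) :
    ExteriorAlgebra k (X → k) :=
  ExteriorAlgebra.ι k (Pi.single x 1)

/-- The ordered wedge product `e_S = ⋀_{x ∈ S} e_x` over a finite subset `S ⊆ X`,
taken in the fixed linear order on `X`. -/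
noncomputable def eWedge (k : Type*) {X : Type*} [Field k] [LinearOrder X] (S : Finset X) :
    ExteriorAlgebra k (X → k) :=
  ((S.sort (· ≤ ·)).map (eVec k)).prod

/-- The isotypic component `L_σ = e_σ ∧ e_{cσ}` of the Lefschetz class. -/
noncomputable def Lsigma (k : Type*) {X : Type*} [Field k] [DecidableEq X] (c : X → X) (σ : X) :
    ExteriorAlgebra k (X → k) :=
  eVec k σ * eVec k (c σ)

/-- The product `L_K = ∏_{σ ∈ K} L_σ` (the factors `L_σ` have even degree, hence commute,
so the ordered product represents the product). -/
noncomputable def LK (k : Type*) {X : Type*} [Field k] [LinearOrder X] (c : X → X)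
    (K : Finset X) : ExteriorAlgebra k (X → k) :=
  ((K.sort (· ≤ ·)).map (Lsigma k c)).prod

/-- The Lefschetz class `L = ∑_{σ ∈ Σ} L_σ = ∑_{σ ∈ Σ} e_σ ∧ e_{cσ}`. -/
noncomputable def Lef (k : Type*) {X : Type*} [Field k] [DecidableEq X] (c : X → X)
    (S : Finset X) : ExteriorAlgebra k (X → k) :=
  ∑ σ ∈ S, Lsigma k c σ

section ExtK
open ExteriorAlgebra
variable {k X : Type*} [Field k] [DecidableEq X]

lemma Lsigma_sq (c : X → X) (σ : X) : Lsigma k c σ * Lsigma k c σ = 0 :=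
  iota_pair_sq _ _

lemma Lsigma_commute (c : X → X) (σ τ : X) :
    Commute (Lsigma k c σ) (Lsigma k c τ) :=
  iota_pair_commute _ _ _ _

lemma evec_sq (x : X) : eVec k x * eVec k x = 0 := ι_sq_zero _

lemma evec_mul_prod_zero (x : X) :
    ∀ (l : List X), x ∈ l → eVec k x * (l.map (eVec k)).prod = 0 := by
  intro l
  induction l with
  | nil => simp
  | cons y t ih =>
    intro hx
    rw [List.map_cons, List.prod_cons, ← mul_assoc]
    rcases List.mem_cons.mp hx with h | h
    · rw [← h, evec_sq, zero_mul]
    · rw [show eVec k x * eVec k y = -(eVec k y * eVec k x) from iota_swap _ _,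
        neg_mul, mul_assoc, ih h, mul_zero, neg_zero]

/-- The wedge of distinct basis vectors is nonzero. -/
lemma prod_evec_ne_zero (l : List X) (hl : l.Nodup) :
    (l.map (eVec k)).prod ≠ 0 := by
  set n := l.length with hn
  have hmap : (l.map (eVec k)) = List.ofFn (fun i : Fin n => ι k (Pi.single (l.get i) 1)) := by
    conv_lhs => rw [← List.ofFn_get l]
    rw [List.map_ofFn]
    rfl
  have hprod : (l.map (eVec k)).prod = ιMulti k n (fun i => Pi.single (l.get i) 1) := by
    rw [ιMulti_apply, hmap]
  set D : (X → k) [⋀^Fin n]→ₗ[k] k :=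
    (Matrix.detRowAlternating).compLinearMap (LinearMap.funLeft k k l.get) with hD
  set f : ∀ j : ℕ, (X → k) [⋀^Fin j]→ₗ[k] k :=
    Function.update (fun j => (0 : (X → k) [⋀^Fin j]→ₗ[k] k)) n D with hf
  intro h0
  have := congrArg (liftAlternating f) (hprod.symm.trans h0)
  rw [map_zero, liftAlternating_apply_ιMulti] at this
  have hfn : f n = D := by rw [hf]; simp
  rw [hfn] at this
  have hval : D (fun i => Pi.single (l.get i) 1) = 1 := by
    rw [hD]
    rw [AlternatingMap.compLinearMap_apply]
    have h1 : (fun i => LinearMap.funLeft k k l.get (Pi.single (l.get i) 1))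
        = (1 : Matrix (Fin n) (Fin n) k) := by
      funext i j
      simp only [LinearMap.funLeft_apply, Matrix.one_apply, Pi.single_apply]
      have hinj := List.nodup_iff_injective_get.mp hl
      by_cases hij : i = j
      · simp [hij]
      · rw [if_neg (fun hgh => hij (hinj hgh).symm), if_neg hij]
    rw [h1]
    exact Matrix.det_one
  rw [hval] at this
  exact one_ne_zero this

/-- A nodup interleaving list for `L_K` products. -/
lemma nodup_flatMap_pair (c : X → X) (hinj : Function.Injective c) :
    ∀ (ml : List X), ml.Nodup → (∀ x ∈ ml, ∀ y ∈ ml, x ≠ c y) →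
      (ml.flatMap fun σ => [σ, c σ]).Nodup := by
  intro ml
  induction ml with
  | nil => simp
  | cons a t ih =>
    intro hnd hcc
    have hat : a ∉ t := (List.nodup_cons.mp hnd).1
    have hndt := (List.nodup_cons.mp hnd).2
    rw [List.flatMap_cons]
    have hmem : ∀ z, z ∈ t.flatMap (fun σ => [σ, c σ]) ↔ ∃ y ∈ t, z = y ∨ z = c y := by
      intro z
      rw [List.mem_flatMap]
      constructor
      · rintro ⟨y, hy, hz⟩
        exact ⟨y, hy, by simpa using hz⟩
      · rintro ⟨y, hy, hz⟩
        exact ⟨y, hy, by simpa using hz⟩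
    show (a :: c a :: t.flatMap fun σ => [σ, c σ]).Nodup
    rw [List.nodup_cons, List.nodup_cons]
    refine ⟨?_, ?_, ih hndt fun x hx y hy =>
      hcc x (List.mem_cons_of_mem _ hx) y (List.mem_cons_of_mem _ hy)⟩
    · rw [List.mem_cons]
      rintro (h | h)
      · exact hcc a (by simp) a (by simp) h
      · rcases (hmem a).mp h with ⟨y, hy, rfl | hca⟩
        · exact hat hy
        · exact hcc a (by simp) y (by simp [hy]) hca
    · intro h
      rcases (hmem (c a)).mp h with ⟨y, hy, hca | hca⟩
      · exact hcc y (by simp [hy]) a (by simp) hca.symm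
      · exact hat (hinj hca ▸ hy)

lemma prod_Lsigma_eq_flatMap (c : X → X) :
    ∀ (ml : List X), (ml.map (Lsigma k c)).prod
      = ((ml.flatMap fun σ => [σ, c σ]).map (eVec k)).prod := by
  intro ml
  induction ml with
  | nil => simp
  | cons a t ih =>
    rw [List.map_cons, List.prod_cons, List.flatMap_cons, List.map_append, List.prod_append, ih]
    show Lsigma k c a * _ = (List.map (eVec k) [a, c a]).prod * _
    simp only [List.map_cons, List.map_nil, List.prod_cons, List.prod_nil, mul_one]
    rw [Lsigma, mul_assoc]

end ExtK

section Proj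
variable (k : Type*) {X : Type*} [Field k] [DecidableEq X]

/-- Coordinate projection onto the coordinates in `T`. -/
noncomputable def projT (T : Finset X) : (X → k) →ₗ[k] (X → k) where
  toFun v := fun x => if x ∈ T then v x else 0
  map_add' u v := by funext x; by_cases h : x ∈ T <;> simp [h]
  map_smul' a v := by funext x; by_cases h : x ∈ T <;> simp [h]

lemma projT_single (T : Finset X) (x : X) :
    projT k T (Pi.single x 1) = if x ∈ T then Pi.single x 1 else 0 := by
  by_cases hx : x ∈ T
  · rw [if_pos hx]
    funext y
    simp only [projT, LinearMap.coe_mk, AddHom.coe_mk]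
    by_cases hy : y ∈ T
    · rw [if_pos hy]
    · rw [if_neg hy, Pi.single_apply, if_neg (fun h : y = x => hy (h ▸ hx))]
  · rw [if_neg hx]
    funext y
    simp only [projT, LinearMap.coe_mk, AddHom.coe_mk, Pi.zero_apply]
    by_cases hy : y ∈ T
    · rw [if_pos hy, Pi.single_apply, if_neg (fun h : y = x => hx (h ▸ hy))]
    · rw [if_neg hy]

lemma mapProj_evec (T : Finset X) (x : X) :
    ExteriorAlgebra.map (projT k T) (eVec k x) = if x ∈ T then eVec k x else 0 := by
  rw [eVec, ExteriorAlgebra.map_apply_ι, projT_single]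
  by_cases hx : x ∈ T
  · rw [if_pos hx, if_pos hx]
  · rw [if_neg hx, if_neg hx, map_zero]

end Proj

set_option maxHeartbeats 1000000 in
/-- Lemma 2.5 of the paper, in the exterior-algebra model: if `I ⊆ Σ`, `J ⊆ cΣ`,
`|I| + |J| = i ≤ g` and `I ∩ c(J) ≠ ∅`, then `L^{g-i+1} ∧ e_{I∪J} ≠ 0`
(a class of such a type is not primitive). -/
theorem stmt7 (k X : Type*) [Field k] [CharZero k] [Fintype X] [LinearOrder X]
    (c : X → X) (hinv : Function.Involutive c) (hfree : ∀ x : X, c x ≠ x)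
    (S : Finset X) (hdisj : Disjoint S (S.image c)) (hcover : S ∪ S.image c = Finset.univ)
    (g : ℕ) (hg : g = S.card)
    (I J : Finset X) (hI : I ⊆ S) (hJ : J ⊆ S.image c)
    (i : ℕ) (hcard : I.card + J.card = i) (hig : i ≤ g)
    (hne : I ∩ J.image c ≠ ∅) :
    Lef k c S ^ (g - i + 1) * eWedge k (I ∪ J) ≠ 0 := by
  have hcinj : Function.Injective c := hinv.injective
  have hnotMem : ∀ x ∈ S, x ∉ S.image c := fun x hx => Finset.disjoint_left.mp hdisj hx
  have hJc : J.image c ⊆ S := by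
    intro x hx
    obtain ⟨y, hy, rfl⟩ := Finset.mem_image.mp hx
    obtain ⟨z, hz, rfl⟩ := Finset.mem_image.mp (hJ hy)
    rwa [hinv z]
  set m := g - i + 1 with hm
  -- choose K₀
  have hsubIJc : I ∪ J.image c ⊆ S := Finset.union_subset hI hJc
  have hcardm : m ≤ (S \ (I ∪ J.image c)).card := by
    rw [Finset.card_sdiff_of_subset hsubIJc, ← hg]
    have h1 := Finset.card_union_add_card_inter I (J.image c)
    have h2 : 1 ≤ (I ∩ J.image c).card :=
      Finset.card_pos.mpr (Finset.nonempty_iff_ne_empty.mpr hne)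
    have h3 : (J.image c).card ≤ J.card := Finset.card_image_le
    omega
  obtain ⟨K₀, hK₀sub, hK₀card⟩ := Finset.exists_subset_card_eq hcardm
  have hK₀S : K₀ ⊆ S := hK₀sub.trans (Finset.sdiff_subset)
  have hK₀I : ∀ x ∈ K₀, x ∉ I ∪ J.image c := fun x hx =>
    (Finset.mem_sdiff.mp (hK₀sub hx)).2
  set T : Finset X := K₀ ∪ K₀.image c ∪ I ∪ J with hT
  set φ := ExteriorAlgebra.map (projT k T) with hφ
  set A := ∑ σ ∈ K₀, Lsigma k c σ with hA
  set B := ∑ σ ∈ I ∩ J.image c, Lsigma k c σ with hB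
  have hIJT : ∀ x ∈ I ∪ J, x ∈ T := by
    intro x hx
    rcases Finset.mem_union.mp hx with h | h
    · simp only [hT, Finset.mem_union]; tauto
    · simp only [hT, Finset.mem_union]; tauto
  -- φ fixes the wedge
  have hφeW : φ (eWedge k (I ∪ J)) = eWedge k (I ∪ J) := by
    rw [eWedge, map_list_prod, List.map_map]
    congr 1
    apply List.map_congr_left
    intro x hx
    show φ (eVec k x) = eVec k x
    rw [hφ, mapProj_evec, if_pos (hIJT x (Finset.mem_sort (α := X) (· ≤ ·) |>.mp hx))]
  -- φ of L
  have hφLs : ∀ σ ∈ K₀ ∪ (I ∩ J.image c), φ (Lsigma k c σ) = Lsigma k c σ := by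
    intro σ hσ
    have hσT : σ ∈ T := by
      rcases Finset.mem_union.mp hσ with h | h
      · simp only [hT, Finset.mem_union]; tauto
      · have := (Finset.mem_inter.mp h).1
        simp only [hT, Finset.mem_union]; tauto
    have hcσT : c σ ∈ T := by
      rcases Finset.mem_union.mp hσ with h | h
      · have : c σ ∈ K₀.image c := Finset.mem_image_of_mem c h
        simp only [hT, Finset.mem_union]; tauto
      · have h2 := (Finset.mem_inter.mp h).2
        obtain ⟨y, hy, rfl⟩ := Finset.mem_image.mp h2
        rw [hinv y]
        simp only [hT, Finset.mem_union]; tauto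
    rw [Lsigma, map_mul, hφ, mapProj_evec, mapProj_evec, if_pos hσT, if_pos hcσT]
  have hφLz : ∀ σ ∈ S, σ ∉ K₀ ∪ (I ∩ J.image c) → φ (Lsigma k c σ) = 0 := by
    intro σ hσS hσn
    have hσK₀ : σ ∉ K₀ := fun h => hσn (Finset.mem_union_left _ h)
    by_cases hσT : σ ∈ T
    · -- then σ ∈ I, and c σ must fail to be in T
      have hσI : σ ∈ I := by
        simp only [hT, Finset.mem_union] at hσT
        rcases hσT with ((h | h) | h) | h
        · exact absurd h hσK₀
        · exact absurd (Finset.image_subset_image hK₀S h) (hnotMem σ hσS)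
        · exact h
        · exact absurd (hJ h) (hnotMem σ hσS)
      have hcσT : c σ ∉ T := by
        intro hcT
        simp only [hT, Finset.mem_union] at hcT
        have hcS : c σ ∈ S.image c := Finset.mem_image_of_mem c hσS
        rcases hcT with ((h | h) | h) | h
        · exact hnotMem (c σ) (hK₀S h) hcS
        · obtain ⟨y, hy, hyc⟩ := Finset.mem_image.mp h
          exact hσK₀ (hcinj hyc ▸ hy)
        · exact hnotMem (c σ) (hI h) hcS
        · -- c σ ∈ J gives σ ∈ J.image c, so σ ∈ I ∩ J.image c
          have : σ ∈ J.image c := by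
            have := Finset.mem_image_of_mem c h
            rwa [hinv σ] at this
          exact hσn (Finset.mem_union_right _ (Finset.mem_inter.mpr ⟨hσI, this⟩))
      rw [Lsigma, map_mul, hφ, mapProj_evec k T (c σ), if_neg hcσT, mul_zero]
    · rw [Lsigma, map_mul, hφ, mapProj_evec k T σ, if_neg hσT, zero_mul]
  have hφL : φ (Lef k c S) = A + B := by
    rw [Lef, map_sum, ← Finset.sum_filter_add_sum_filter_not S
      (fun σ => σ ∈ K₀ ∪ (I ∩ J.image c))]
    have hz : ∑ σ ∈ S.filter (fun σ => σ ∉ K₀ ∪ (I ∩ J.image c)), φ (Lsigma k c σ) = 0 := by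
      apply Finset.sum_eq_zero
      intro σ hσ
      have := Finset.mem_filter.mp hσ
      exact hφLz σ this.1 this.2
    have hWsub : K₀ ∪ (I ∩ J.image c) ⊆ S :=
      Finset.union_subset hK₀S ((Finset.inter_subset_left).trans hI)
    have hflt : S.filter (fun σ => σ ∈ K₀ ∪ (I ∩ J.image c)) = K₀ ∪ (I ∩ J.image c) := by
      rw [Finset.filter_mem_eq_inter, Finset.inter_eq_right.mpr hWsub]
    rw [hz, add_zero, hflt, Finset.sum_congr rfl (fun σ hσ => hφLs σ hσ),
      Finset.sum_union]
    exact Finset.disjoint_left.mpr fun x hx h2 =>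
      hK₀I x hx (Finset.mem_union.mpr (Or.inl (Finset.mem_inter.mp h2).1))
  -- main argument
  intro h0
  have h1 : (A + B) ^ m * eWedge k (I ∪ J) = 0 := by
    have := congrArg φ h0
    rwa [map_mul, map_pow, hφL, hφeW, map_zero] at this
  -- B * eWedge = 0
  have hBe : B * eWedge k (I ∪ J) = 0 := by
    rw [hB, Finset.sum_mul]
    apply Finset.sum_eq_zero
    intro σ hσ
    have hσI : σ ∈ I := (Finset.mem_inter.mp hσ).1
    rw [Lsigma, eWedge, mul_assoc]
    have : eVec k (c σ) * (((I ∪ J).sort (· ≤ ·)).map (eVec k)).prod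
        = ((c σ :: (I ∪ J).sort (· ≤ ·)).map (eVec k)).prod := by
      rw [List.map_cons, List.prod_cons]
    rw [this]
    exact evec_mul_prod_zero σ _ (List.mem_cons_of_mem _
      ((Finset.mem_sort (α := X) (· ≤ ·)).mpr (Finset.mem_union_left _ hσI)))
  have hABcomm : Commute A B := by
    apply Commute.sum_right
    intro σ _
    apply Commute.sum_left
    intro τ _
    exact Lsigma_commute c τ σ
  have hAe : A ^ m * eWedge k (I ∪ J) = 0 := by
    rw [Commute.add_pow hABcomm, Finset.sum_mul] at h1
    have hzero : ∀ j ∈ Finset.range (m+1), j ≠ m →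
        A ^ j * B ^ (m - j) * (m.choose j : ExteriorAlgebra k (X → k)) * eWedge k (I ∪ J)
          = 0 := by
      intro j hj hjm
      have hp : m - j = (m - j - 1) + 1 := by
        have := Finset.mem_range.mp hj
        omega
      rw [mul_assoc (A ^ j * B ^ (m - j)),
        (Nat.cast_commute (m.choose j) (eWedge k (I ∪ J))).eq,
        ← mul_assoc, mul_assoc (A ^ j), hp, pow_succ, mul_assoc (B ^ (m - j - 1)),
        hBe, mul_zero, mul_zero, zero_mul]
    have hs := Finset.sum_eq_single_of_mem
      (f := fun j => A ^ j * B ^ (m - j) * (m.choose j : ExteriorAlgebra k (X → k))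
        * eWedge k (I ∪ J))
      m (Finset.mem_range.mpr (Nat.lt_succ_self m)) hzero
    rw [hs] at h1
    simpa using h1
  -- A ^ m = m! • LK K₀
  have hAlist : A = ((K₀.sort (· ≤ ·)).map (Lsigma k c)).sum := by
    rw [hA]
    rw [← Multiset.sum_coe, ← Multiset.map_coe, Finset.sort_eq]
    rfl
  have hlen : ((K₀.sort (· ≤ ·)).map (Lsigma k c)).length = m := by
    rw [List.length_map, Finset.length_sort, hK₀card]
  have hAm : A ^ m = m.factorial • LK k c K₀ := by
    rw [hAlist, ← hlen]
    rw [aux_sum_pow_length _ ?_ ?_]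
    · rw [hlen]; rfl
    · intro a ha
      obtain ⟨σ, _, rfl⟩ := List.mem_map.mp ha
      exact Lsigma_sq c σ
    · intro a ha b hb
      obtain ⟨σ, _, rfl⟩ := List.mem_map.mp ha
      obtain ⟨τ, _, rfl⟩ := List.mem_map.mp hb
      exact (Lsigma_commute c σ τ).eq
  -- conclude LK K₀ * eWedge = 0
  have hLKe : LK k c K₀ * eWedge k (I ∪ J) = 0 := by
    rw [hAm, smul_mul_assoc] at hAe
    have hcast : (m.factorial : k) • (LK k c K₀ * eWedge k (I ∪ J)) = 0 := by
      rw [Nat.cast_smul_eq_nsmul]; exact hAe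
    rcases smul_eq_zero.mp hcast with h | h
    · exact absurd h (Nat.cast_ne_zero.mpr m.factorial_ne_zero)
    · exact h
  -- but LK K₀ * eWedge ≠ 0  : it is a wedge of distinct basis vectors
  set bigL : List X := ((K₀.sort (· ≤ ·)).flatMap fun σ => [σ, c σ]) ++
    (I ∪ J).sort (· ≤ ·) with hbigL
  have hprod : LK k c K₀ * eWedge k (I ∪ J) = (bigL.map (eVec k)).prod := by
    rw [LK, eWedge, prod_Lsigma_eq_flatMap, hbigL, List.map_append, List.prod_append]
  have hmemflat : ∀ z, z ∈ (K₀.sort (· ≤ ·)).flatMap (fun σ => [σ, c σ]) →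
      ∃ y ∈ K₀, z = y ∨ z = c y := by
    intro z hz
    obtain ⟨y, hy, hmem⟩ := List.mem_flatMap.mp hz
    exact ⟨y, (Finset.mem_sort (α := X) (· ≤ ·)).mp hy, by simpa using hmem⟩
  have hnodup : bigL.Nodup := by
    rw [hbigL, List.nodup_append]
    refine ⟨?_, Finset.sort_nodup _ _, ?_⟩
    · apply nodup_flatMap_pair c hcinj _ (Finset.sort_nodup _ _)
      intro x hx y hy hxy
      have hxS : x ∈ S := hK₀S ((Finset.mem_sort (α := X) (· ≤ ·)).mp hx)
      have hyS : y ∈ S := hK₀S ((Finset.mem_sort (α := X) (· ≤ ·)).mp hy)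
      exact hnotMem x hxS (hxy ▸ Finset.mem_image_of_mem c hyS)
    · intro z hz w hz2 hzw
      subst hzw
      have hzIJ : z ∈ I ∪ J := (Finset.mem_sort (α := X) (· ≤ ·)).mp hz2
      obtain ⟨y, hyK, hzy | hzy⟩ := hmemflat z hz
      · rw [hzy] at hzIJ
        rcases Finset.mem_union.mp hzIJ with h | h
        · exact hK₀I y hyK (Finset.mem_union_left _ h)
        · exact hnotMem y (hK₀S hyK) (hJ h)
      · rw [hzy] at hzIJ
        rcases Finset.mem_union.mp hzIJ with h | h
        · exact hnotMem (c y) (hI h) (Finset.mem_image_of_mem c (hK₀S hyK))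
        · have : y ∈ J.image c := by
            have := Finset.mem_image_of_mem c h
            rwa [hinv y] at this
          exact hK₀I y hyK (Finset.mem_union_right _ this)
  exact prod_evec_ne_zero bigL hnodup (hprod ▸ hLKe)
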